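/- If ⟦φ⟧ ∩ [w]_Γ is nonempty, then Min_{⊑_w^Γ}(⟦φ⟧) = Min_{⊴_w^Γ}(⟦φ⟧), i.e., when some φ-world fully agrees with w on Γ, the maximal-superset minimal φ-worlds coincide with the strict-agreement minimal φ-worlds. -/

import Mathlib

open Set

/-- Minimal elements of `S` within domain `D` w.r.t. the strict part of `r`. -/
def minOnRel {W : Type*} (r : W → W → Prop) (D S : Set W) : Set W :=
  {v | v ∈ S ∩ D ∧ ∀ u ∈ S ∩ D, ¬ (r u v ∧ ¬ r v u)}

/-- The set of formulas in `Γ` on whose truth `u` agrees with `w`. -/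
def agreeSet {W F : Type*} (sat : W → F → Prop) (Γ : Set F) (w u : W) : Set F :=
  {γ ∈ Γ | (sat u γ ↔ sat w γ)}

/-- `[w]_Γ`: worlds of `Ww` agreeing with `w` on every formula of `Γ`. -/
def cpCls {W F : Type*} (sat : W → F → Prop) (Γ : Set F) (Ww : Set W) (w : W) : Set W :=
  {u ∈ Ww | ∀ γ ∈ Γ, (sat u γ ↔ sat w γ)}

/-- `⊴_w^Γ`: the restriction of `pre` to `[w]_Γ`. -/
def cpRel {W F : Type*} (sat : W → F → Prop) (Γ : Set F) (Ww : Set W)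
    (pre : W → W → Prop) (w : W) (u v : W) : Prop :=
  u ∈ cpCls sat Γ Ww w ∧ v ∈ cpCls sat Γ Ww w ∧ pre u v

/-- The restriction of a relation `pre` to a subset `A`. -/
def restrictRel {W : Type*} (A : Set W) (pre : W → W → Prop) (u v : W) : Prop :=
  u ∈ A ∧ v ∈ A ∧ pre u v

/-- `⪯_w^Γ`: the naive-counting relation. -/
def ncRel {W F : Type*} (sat : W → F → Prop) (Γ : Finset F)
    (pre : W → W → Prop) (w : W) (u v : W) : Prop :=
  (agreeSet sat (↑Γ) w u).ncard > (agreeSet sat (↑Γ) w v).ncard ∨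
    ((agreeSet sat (↑Γ) w u).ncard = (agreeSet sat (↑Γ) w v).ncard ∧ pre u v)

/-- `⊑_w^Γ`: the maximal-superset relation. -/
def msRel {W F : Type*} (sat : W → F → Prop) (Γ : Set F)
    (pre : W → W → Prop) (w : W) (u v : W) : Prop :=
  agreeSet sat Γ w v ⊂ agreeSet sat Γ w u ∨
    (agreeSet sat Γ w v = agreeSet sat Γ w u ∧ pre u v)


lemma agree_sub {W F : Type*} (sat : W → F → Prop) (Γ : Set F) (w u : W) :
    agreeSet sat Γ w u ⊆ Γ := fun _ h => h.1

lemma cp_iff {W F : Type*} (sat : W → F → Prop) (Γ : Set F) (Ww : Set W) (w u : W) :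
    u ∈ cpCls sat Γ Ww w ↔ u ∈ Ww ∧ agreeSet sat Γ w u = Γ := by
  constructor
  · rintro ⟨hu, h⟩
    refine ⟨hu, Subset.antisymm (agree_sub sat Γ w u) fun γ hγ => ⟨hγ, h γ hγ⟩⟩
  · rintro ⟨hu, h⟩
    refine ⟨hu, fun γ hγ => ?_⟩
    rw [← h] at hγ
    exact hγ.2

theorem ms_min_eq_cp_min {W F : Type*} (sat : W → F → Prop) (Γ : Finset F)
    (Ww : Set W) (pre : W → W → Prop) (w : W) (P : Set W)
    (hrefl : ∀ u ∈ Ww, pre u u)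
    (htrans : ∀ u ∈ Ww, ∀ v ∈ Ww, ∀ x ∈ Ww, pre u v → pre v x → pre u x)
    (htot : ∀ u ∈ Ww, ∀ v ∈ Ww, pre u v ∨ pre v u)
    (hwf : ∀ S : Set W, S ⊆ Ww → S.Nonempty →
      ∃ v ∈ S, ∀ u ∈ S, ¬ (pre u v ∧ ¬ pre v u))
    (hne : (P ∩ cpCls sat (↑Γ) Ww w).Nonempty) :
    minOnRel (msRel sat (↑Γ) pre w) Ww P =
      minOnRel (cpRel sat (↑Γ) Ww pre w) (cpCls sat (↑Γ) Ww w) P := by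
  ext v
  simp only [minOnRel, mem_setOf_eq, mem_inter_iff]
  obtain ⟨z, hzP, hzc⟩ := hne
  have hzWw : z ∈ Ww := hzc.1
  have hzA : agreeSet sat (↑Γ) w z = ↑Γ := ((cp_iff _ _ _ _ _).1 hzc).2
  constructor
  · rintro ⟨⟨hvP, hvW⟩, hmin⟩
    have hvA : agreeSet sat (↑Γ) w v = ↑Γ := by
      by_contra hA
      have hss : agreeSet sat (↑Γ) w v ⊂ agreeSet sat (↑Γ) w z := by
        rw [hzA]; exact ssubset_of_subset_of_ne (agree_sub _ _ _ _) hA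
      exact hmin z ⟨hzP, hzWw⟩
        ⟨Or.inl hss, fun h => by
          rcases h with h | ⟨h, _⟩
          · exact (hss.trans h).ne rfl
          · exact hss.ne h.symm⟩
    have hvc : v ∈ cpCls sat (↑Γ) Ww w := (cp_iff _ _ _ _ _).2 ⟨hvW, hvA⟩
    refine ⟨⟨hvP, hvc⟩, ?_⟩
    rintro u ⟨huP, huc⟩ ⟨⟨_, _, hpuv⟩, hnc⟩
    have huA : agreeSet sat (↑Γ) w u = ↑Γ := ((cp_iff _ _ _ _ _).1 huc).2
    have hnp : ¬ pre v u := fun hp => hnc ⟨hvc, huc, hp⟩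
    exact hmin u ⟨huP, huc.1⟩
      ⟨Or.inr ⟨hvA.trans huA.symm, hpuv⟩, fun h => by
        rcases h with h | ⟨_, hp⟩
        · exact h.ne (huA.trans hvA.symm)
        · exact hnp hp⟩
  · rintro ⟨⟨hvP, hvc⟩, hmin⟩
    have hvA : agreeSet sat (↑Γ) w v = ↑Γ := ((cp_iff _ _ _ _ _).1 hvc).2
    refine ⟨⟨hvP, hvc.1⟩, ?_⟩
    rintro u ⟨huP, huW⟩ ⟨hms, hnms⟩
    rcases hms with h | ⟨heq, hpuv⟩
    · have hsub : agreeSet sat (↑Γ) w u ⊆ agreeSet sat (↑Γ) w v := by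
        rw [hvA]; exact agree_sub _ _ _ _
      exact ((h.trans_subset hsub).ne rfl).elim
    · have huA : agreeSet sat (↑Γ) w u = ↑Γ := heq ▸ hvA
      have huc : u ∈ cpCls sat (↑Γ) Ww w := (cp_iff _ _ _ _ _).2 ⟨huW, huA⟩
      refine hmin u ⟨huP, huc⟩ ⟨⟨huc, hvc, hpuv⟩, fun ⟨_, _, hpvu⟩ =>
        hnms (Or.inr ⟨heq.symm, hpvu⟩)⟩
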